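/- Let S ⊆ B(Z) be a closed convex semigroup and γ : [0,ε] → S a C² curve with γ(0) = id and γ'(0) ∈ E(L(S)) (the edge, i.e., the largest linear subspace contained in L(S)). Then γ''(0) ∈ L(S). -/

import Mathlib

open NormedSpace

lemma my_norm_exp_le {𝔸 : Type*} [NormedRing 𝔸] [NormedAlgebra ℝ 𝔸] [CompleteSpace 𝔸] [NormOneClass 𝔸]
    (x : 𝔸) : ‖exp x‖ ≤ Real.exp ‖x‖ := by
  have h1 : Real.exp ‖x‖ = ∑' n : ℕ, ((Nat.factorial n : ℝ)⁻¹) * ‖x‖ ^ n := by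
    rw [Real.exp_eq_exp_ℝ, exp_eq_tsum ℝ]
    simp [smul_eq_mul]
  rw [exp_eq_tsum ℝ, h1]
  calc ‖(∑' n : ℕ, ((Nat.factorial n : ℝ)⁻¹) • x ^ n)‖
      ≤ ∑' n : ℕ, ‖((Nat.factorial n : ℝ)⁻¹) • x ^ n‖ :=
        norm_tsum_le_tsum_norm (norm_expSeries_summable' x)
    _ ≤ ∑' n : ℕ, ((Nat.factorial n : ℝ)⁻¹) * ‖x‖ ^ n := by
        apply Summable.tsum_le_tsum _ (norm_expSeries_summable' x)
        · exact (Real.summable_pow_div_factorial ‖x‖).congr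
            (by intro n; rw [div_eq_inv_mul])
        · intro n
          rw [norm_smul, norm_inv, Real.norm_natCast]
          exact mul_le_mul_of_nonneg_left (norm_pow_le x n) (by positivity)

lemma my_pow_sub_pow {𝔸 : Type*} [NormedRing 𝔸] [NormOneClass 𝔸] (P Q : 𝔸) (M : ℝ)
    (hM : 1 ≤ M) (hP : ‖P‖ ≤ M) (hQ : ‖Q‖ ≤ M) (n : ℕ) :
    ‖P ^ n - Q ^ n‖ ≤ n * M ^ n * ‖P - Q‖ := by
  induction n with
  | zero => simp
  | succ n ih =>
    have key : P ^ (n+1) - Q ^ (n+1) = P ^ n * (P - Q) + (P ^ n - Q ^ n) * Q := by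
      rw [pow_succ, pow_succ]; noncomm_ring
    have hMn : (0:ℝ) ≤ M ^ n := pow_nonneg (by linarith) n
    have h1 : ‖P ^ n * (P - Q)‖ ≤ M ^ n * ‖P - Q‖ := by
      calc ‖P ^ n * (P - Q)‖ ≤ ‖P ^ n‖ * ‖P - Q‖ := norm_mul_le _ _
        _ ≤ M ^ n * ‖P - Q‖ := by
            gcongr
            exact (norm_pow_le P n).trans (pow_le_pow_left₀ (norm_nonneg P) hP n)
    have h2 : ‖(P ^ n - Q ^ n) * Q‖ ≤ (n * M ^ n * ‖P - Q‖) * M := by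
      calc ‖(P ^ n - Q ^ n) * Q‖ ≤ ‖P ^ n - Q ^ n‖ * ‖Q‖ := norm_mul_le _ _
        _ ≤ (n * M ^ n * ‖P - Q‖) * M := by
            apply mul_le_mul ih hQ (norm_nonneg Q)
            positivity
    calc ‖P ^ (n+1) - Q ^ (n+1)‖ ≤ ‖P ^ n * (P - Q)‖ + ‖(P ^ n - Q ^ n) * Q‖ := by
          rw [key]; exact norm_add_le _ _
      _ ≤ M ^ n * ‖P - Q‖ + (n * M ^ n * ‖P - Q‖) * M := add_le_add h1 h2
      _ ≤ (↑(n + 1) : ℝ) * M ^ (n + 1) * ‖P - Q‖ := by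
          have hn : (0:ℝ) ≤ n := Nat.cast_nonneg n
          have h3 : (0:ℝ) ≤ ‖P - Q‖ := norm_nonneg _
          rw [pow_succ]
          push_cast
          nlinarith [mul_nonneg (mul_nonneg hMn h3) (sub_nonneg.mpr hM)]

set_option maxHeartbeats 2000000 in
/-- If `S` is a closed convex subsemigroup of the bounded operators containing the identity
and `γ : [0,ε] → S` is a `C²` curve with `γ(0) = id` and `γ'(0)` in the edge of the
Lie wedge `L(S)` (i.e. both `γ'(0)` and `-γ'(0)` lie in `L(S)`), then `γ''(0) ∈ L(S)`. -/
theorem stmt_6 {Z : Type*} [NormedAddCommGroup Z] [NormedSpace ℝ Z] [FiniteDimensional ℝ Z]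
    (S : Set (Z →L[ℝ] Z)) (hSclosed : IsClosed S) (hSconv : Convex ℝ S)
    (hid : ContinuousLinearMap.id ℝ Z ∈ S)
    (hmul : ∀ A ∈ S, ∀ B ∈ S, A.comp B ∈ S)
    (ε : ℝ) (hε : 0 < ε) (γ γ' : ℝ → (Z →L[ℝ] Z)) (B₀ : Z →L[ℝ] Z)
    (hγS : ∀ t ∈ Set.Icc (0:ℝ) ε, γ t ∈ S)
    (hγ0 : γ 0 = ContinuousLinearMap.id ℝ Z)
    (hγ' : ∀ t ∈ Set.Icc (0:ℝ) ε, HasDerivWithinAt γ (γ' t) (Set.Icc (0:ℝ) ε) t)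
    (hγ'' : HasDerivWithinAt γ' B₀ (Set.Icc (0:ℝ) ε) 0)
    (hedge₁ : ∀ t : ℝ, 0 ≤ t → exp (t • γ' 0) ∈ S)
    (hedge₂ : ∀ t : ℝ, 0 ≤ t → exp (t • (-(γ' 0))) ∈ S) :
    ∀ t : ℝ, 0 ≤ t → exp (t • B₀) ∈ S := by
  rcases subsingleton_or_nontrivial Z with hZ | hZ
  · intro t ht
    have : exp (t • B₀) = ContinuousLinearMap.id ℝ Z :=
      ContinuousLinearMap.ext fun z => Subsingleton.elim _ _
    rw [this]; exact hid
  intro t ht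
  -- notation
  set A : Z →L[ℝ] Z := γ' 0 with hA
  set I : Set ℝ := Set.Icc (0:ℝ) ε with hI
  have hone : (1 : Z →L[ℝ] Z) = ContinuousLinearMap.id ℝ Z := ContinuousLinearMap.one_def
  have hid1 : (1 : Z →L[ℝ] Z) ∈ S := by rw [hone]; exact hid
  have hmul' : ∀ a ∈ S, ∀ b ∈ S, a * b ∈ S := hmul
  have hγ0' : γ 0 = 1 := by rw [hγ0, hone]
  -- the curve q
  set u : ℝ → (Z →L[ℝ] Z) := fun s => exp (s • (-A)) with hu_def
  set w : ℝ → (Z →L[ℝ] Z) := fun s => exp (s • A) with hw_def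
  set v : ℝ → (Z →L[ℝ] Z) := fun s => (2⁻¹:ℝ) • w s + (2⁻¹:ℝ) • u s with hv_def
  set v' : ℝ → (Z →L[ℝ] Z) := fun s => (2⁻¹:ℝ) • (w s * A) + (2⁻¹:ℝ) • (u s * (-A)) with hv'_def
  set q : ℝ → (Z →L[ℝ] Z) := fun s => u s * γ s * v s with hq_def
  set qd : ℝ → (Z →L[ℝ] Z) :=
    fun s => (u s * (-A) * γ s + u s * γ' s) * v s + u s * γ s * v' s with hqd_def
  have hu : ∀ s : ℝ, HasDerivAt u (u s * (-A)) s := fun s => hasDerivAt_exp_smul_const (-A) s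
  have hw : ∀ s : ℝ, HasDerivAt w (w s * A) s := fun s => hasDerivAt_exp_smul_const A s
  have hv : ∀ s : ℝ, HasDerivAt v (v' s) s := fun s =>
    ((hw s).const_smul (2⁻¹:ℝ)).add ((hu s).const_smul (2⁻¹:ℝ))
  have hu0 : u 0 = 1 := by simp [hu_def]
  have hw0 : w 0 = 1 := by simp [hw_def]
  have hv0 : v 0 = 1 := by
    rw [hv_def]; simp only [hu0, hw0]
    rw [← add_smul]; norm_num
  have hv'0 : v' 0 = 0 := by
    rw [hv'_def]; simp only [hu0, hw0, one_mul]
    rw [smul_neg, ← sub_eq_add_neg, sub_eq_zero]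
  have hq0 : q 0 = 1 := by rw [hq_def]; simp only [hu0, hγ0', hv0, one_mul, mul_one]
  have hqd0 : qd 0 = 0 := by
    rw [hqd_def]; simp only [hu0, hγ0', hv0, hv'0, one_mul, mul_one, mul_zero]
    simp [← hA]
  -- q has derivative qd on I
  have hmem0 : (0:ℝ) ∈ I := by rw [hI]; exact ⟨le_refl 0, hε.le⟩
  have hq' : ∀ s ∈ I, HasDerivWithinAt q (qd s) I s := by
    intro s hs
    exact (((hu s).hasDerivWithinAt.mul (hγ' s hs)).mul (hv s).hasDerivWithinAt)
  -- qd has derivative B₀ at 0 within I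
  have hγA : HasDerivWithinAt γ A I 0 := hγ' 0 hmem0
  have hB : HasDerivWithinAt qd B₀ I 0 := by
    have h1 : HasDerivWithinAt (fun s => u s * (-A)) ((u 0 * (-A)) * (-A)) I 0 :=
      ((hu 0).mul_const (-A)).hasDerivWithinAt
    have h2 : HasDerivWithinAt (fun s => u s * (-A) * γ s)
        ((u 0 * (-A)) * (-A) * γ 0 + (u 0 * (-A)) * A) I 0 := h1.mul hγA
    have h3 : HasDerivWithinAt (fun s => u s * γ' s)
        ((u 0 * (-A)) * γ' 0 + u 0 * B₀) I 0 := (hu 0).hasDerivWithinAt.mul hγ''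
    have h4 := h2.add h3
    have h5 := h4.mul (hv 0).hasDerivWithinAt
    have h6 : HasDerivWithinAt v'
        ((2⁻¹:ℝ) • ((w 0 * A) * A) + (2⁻¹:ℝ) • ((u 0 * (-A)) * (-A))) I 0 :=
      ((((hw 0).mul_const A).const_smul (2⁻¹:ℝ)).add
        (((hu 0).mul_const (-A)).const_smul (2⁻¹:ℝ))).hasDerivWithinAt
    have h7 := ((hu 0).hasDerivWithinAt.mul hγA).mul h6
    have h8 := h5.add h7
    refine h8.congr_deriv ?_
    symm
    simp only [Pi.mul_apply, Pi.add_apply]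
    rw [hu0, hw0, hγ0', hv0, hv'0, ← hA]
    simp only [one_mul, mul_one, mul_zero, add_zero, zero_add, neg_mul, mul_neg, neg_neg,
      zero_mul, smul_add, smul_neg]
    rw [← add_smul]
    norm_num
  -- membership of q in S
  have hqS : ∀ s ∈ I, q s ∈ S := by
    intro s hs
    have hs0 : (0:ℝ) ≤ s := hs.1
    have huS : u s ∈ S := hedge₂ s hs0
    have hwS : w s ∈ S := hedge₁ s hs0
    have hvS : v s ∈ S := hSconv hwS huS (by norm_num) (by norm_num) (by norm_num)
    exact hmul' _ (hmul' _ huS _ (hγS s hs)) _ hvS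
  have hpowS : ∀ x ∈ S, ∀ n : ℕ, x ^ n ∈ S := by
    intro x hx n
    induction n with
    | zero => simpa using hid1
    | succ n ih => rw [pow_succ]; exact hmul' _ ih _ hx
  -- KEY Taylor estimate
  have KEY : ∀ δ : ℝ, 0 < δ → ∃ s₀ > 0, ∀ s : ℝ, 0 < s → s < s₀ → s ≤ ε →
      ‖q s - exp ((s^2/2) • B₀)‖ ≤ δ * s^2 := by
    intro δ hδ
    have hlo := (hasDerivWithinAt_iff_isLittleO.1 hB).def (half_pos hδ)
    have hev1 : ∀ᶠ x in nhdsWithin 0 I, ‖qd x - x • B₀‖ ≤ δ/2 * |x| := by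
      filter_upwards [hlo] with x hx
      simpa [hqd0, Real.norm_eq_abs] using hx
    have hcont : Continuous fun r : ℝ => B₀ - exp ((r^2/2) • B₀) * B₀ :=
      continuous_const.sub (((continuous_iff_continuousAt.2 fun x => (exp_analytic (𝕂 := ℝ) x).continuousAt).comp
        (((continuous_pow 2).div_const 2).smul continuous_const)).mul continuous_const)
    have hcz : (fun r : ℝ => B₀ - exp ((r^2/2) • B₀) * B₀) 0 = 0 := by
      simp
    have hev2' : ∀ᶠ x in nhds (0:ℝ), ‖B₀ - exp ((x^2/2) • B₀) * B₀‖ < δ/2 := by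
      have h := hcont.tendsto' 0 0 hcz
      have h2 := Metric.tendsto_nhds.1 h (δ/2) (half_pos hδ)
      simpa [dist_eq_norm] using h2
    have hev := hev1.and (hev2'.filter_mono nhdsWithin_le_nhds)
    obtain ⟨s₀, hs₀, hsub⟩ := Metric.mem_nhdsWithin_iff.1 hev
    refine ⟨s₀, hs₀, ?_⟩
    intro s hspos hss₀ hsε
    have hJI : Set.Icc (0:ℝ) s ⊆ I := by
      rw [hI]; exact Set.Icc_subset_Icc le_rfl hsε
    set F : ℝ → (Z →L[ℝ] Z) := fun r => q r - exp ((r^2/2) • B₀) with hF_def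
    set F' : ℝ → (Z →L[ℝ] Z) := fun r => qd r - r • (exp ((r^2/2) • B₀) * B₀) with hF'_def
    have hFd : ∀ x ∈ Set.Icc (0:ℝ) s, HasDerivWithinAt F (F' x) (Set.Icc (0:ℝ) s) x := by
      intro x hx
      have hq'' := (hq' x (hJI hx)).mono hJI
      have hφ : HasDerivAt (fun r : ℝ => r^2/2) x x := by
        have h := (hasDerivAt_pow 2 x).div_const 2
        refine h.congr_deriv ?_
        simp
      have hE : HasDerivAt (fun y : ℝ => exp (y • B₀)) (exp ((x^2/2) • B₀) * B₀) (x^2/2) :=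
        hasDerivAt_exp_smul_const B₀ (x^2/2)
      have hcomp := (hE.scomp x hφ).hasDerivWithinAt (s := Set.Icc (0:ℝ) s)
      exact hq''.sub hcomp
    have hbound : ∀ x ∈ Set.Icc (0:ℝ) s, ‖F' x‖ ≤ δ * s := by
      intro x hx
      have hxI : x ∈ Metric.ball (0:ℝ) s₀ ∩ I := by
        constructor
        · rw [Metric.mem_ball, Real.dist_eq, sub_zero, abs_of_nonneg hx.1]
          exact lt_of_le_of_lt hx.2 hss₀
        · exact hJI hx
      obtain ⟨P1, P2⟩ := hsub hxI
      have hsplit : F' x = (qd x - x • B₀) + x • (B₀ - exp ((x^2/2) • B₀) * B₀) := by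
        rw [hF'_def]; rw [smul_sub]; abel
      rw [hsplit]
      calc ‖(qd x - x • B₀) + x • (B₀ - exp ((x^2/2) • B₀) * B₀)‖
          ≤ ‖qd x - x • B₀‖ + ‖x • (B₀ - exp ((x^2/2) • B₀) * B₀)‖ := norm_add_le _ _
        _ ≤ δ/2 * |x| + |x| * (δ/2) := by
            apply add_le_add P1
            have hns := norm_smul (α := ℝ) x (B₀ - exp ((x^2/2) • B₀) * B₀)
            rw [Real.norm_eq_abs] at hns
            refine le_trans (le_of_eq hns) ?_
            exact mul_le_mul_of_nonneg_left P2.le (abs_nonneg x)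
        _ ≤ δ * s := by
            rw [abs_of_nonneg hx.1]
            nlinarith [hx.2, hx.1]
    have hmvt := Convex.norm_image_sub_le_of_norm_hasDerivWithin_le hFd hbound
      (convex_Icc 0 s) (Set.left_mem_Icc.2 hspos.le) (Set.right_mem_Icc.2 hspos.le)
    have hF0 : F 0 = 0 := by rw [hF_def]; simp [hq0]
    rw [hF0, sub_zero, sub_zero, Real.norm_eq_abs, abs_of_nonneg hspos.le] at hmvt
    calc ‖q s - exp ((s^2/2) • B₀)‖ = ‖F s‖ := rfl
      _ ≤ δ * s * s := hmvt
      _ = δ * s^2 := by ring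
  -- dispatch t = 0
  rcases eq_or_lt_of_le ht with h0 | htpos
  · rw [← h0]
    simpa [exp_zero] using hid1
  -- now t > 0 : the limiting argument
  set K : ℝ := Real.exp (t * ‖B₀‖ + 2*t) with hK_def
  have hK1 : 1 ≤ K := Real.one_le_exp (by positivity)
  have hK0 : 0 < K := lt_of_lt_of_le one_pos hK1
  set sN : ℕ → ℝ := fun n => Real.sqrt (2*t/n) with hsN_def
  have htendN : Filter.Tendsto sN Filter.atTop (nhds 0) := by
    have h1 : Filter.Tendsto (fun n : ℕ => 2*t/n) Filter.atTop (nhds 0) :=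
      tendsto_const_div_atTop_nhds_zero_nat (2*t)
    have h2 : Filter.Tendsto (fun n : ℕ => Real.sqrt (2*t/n)) Filter.atTop
        (nhds (Real.sqrt 0)) := (Real.continuous_sqrt.tendsto 0).comp h1
    rw [Real.sqrt_zero] at h2
    exact h2
  set Qn : ℕ → (Z →L[ℝ] Z) := fun n => exp ((t/n) • B₀) with hQn_def
  have hQpow : ∀ n : ℕ, 1 ≤ n → Qn n ^ n = exp (t • B₀) := by
    intro n hn
    have hne : (n:ℝ) ≠ 0 := Nat.cast_ne_zero.2 (by omega)
    letI : NormedAlgebra ℚ (Z →L[ℝ] Z) := NormedAlgebra.restrictScalars ℚ ℝ (Z →L[ℝ] Z)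
    rw [hQn_def, ← exp_nsmul]
    congr 1
    rw [← Nat.cast_smul_eq_nsmul ℝ, smul_smul]
    congr 1
    field_simp
  have e2 : ∀ᶠ n in Filter.atTop, sN n < ε := htendN.eventually (gt_mem_nhds hε)
  have e3 : ∀ᶠ n in Filter.atTop, 1 ≤ n := Filter.eventually_ge_atTop 1
  have hmain : Filter.Tendsto (fun n : ℕ => q (sN n) ^ n) Filter.atTop
      (nhds (exp (t • B₀))) := by
    rw [Metric.tendsto_atTop]
    intro η hη
    set δ : ℝ := min 1 (η / (4*t*K)) with hδ_def
    have hδ0 : 0 < δ := lt_min one_pos (by positivity)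
    have hδ1 : δ ≤ 1 := min_le_left _ _
    obtain ⟨s₀, hs₀, hKEY⟩ := KEY δ hδ0
    have e1 : ∀ᶠ n in Filter.atTop, sN n < s₀ := htendN.eventually (gt_mem_nhds hs₀)
    have hev : ∀ᶠ n in Filter.atTop, dist (q (sN n) ^ n) (exp (t • B₀)) < η := by
      filter_upwards [e1, e2, e3] with n h1 h2 h3
      have hnpos : (0:ℝ) < n := by exact_mod_cast Nat.pos_of_ne_zero (by omega)
      have hsq : sN n ^ 2 = 2*t/n := Real.sq_sqrt (by positivity)
      have hspos : 0 < sN n := Real.sqrt_pos.2 (by positivity)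
      have heq2 : sN n ^ 2 / 2 = t / n := by rw [hsq]; ring
      have hPQ : ‖q (sN n) - Qn n‖ ≤ δ * (2*t/n) := by
        have hk := hKEY (sN n) hspos h1 h2.le
        rw [heq2, hsq] at hk
        exact hk
      set Mn : ℝ := Real.exp ((t * ‖B₀‖ + 2*t)/n) with hMn_def
      have hMn1 : 1 ≤ Mn := Real.one_le_exp (by positivity)
      have hns : ‖(t/(n:ℝ)) • B₀‖ = t/(n:ℝ) * ‖B₀‖ := by
        have h := norm_smul (α := ℝ) (t/(n:ℝ)) B₀
        rwa [Real.norm_eq_abs, abs_of_nonneg (by positivity : (0:ℝ) ≤ t/(n:ℝ))] at h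
      have hQ2 : ‖Qn n‖ ≤ Mn := by
        refine (my_norm_exp_le _).trans (Real.exp_le_exp.2 ?_)
        calc ‖(t/(n:ℝ)) • B₀‖ = t/(n:ℝ) * ‖B₀‖ := hns
          _ = t * ‖B₀‖ / n := by rw [div_mul_eq_mul_div]
          _ ≤ (t * ‖B₀‖ + 2*t)/n := by rw [div_le_div_iff₀ hnpos hnpos]; nlinarith [htpos, hnpos]
      have hexp1 : (1:ℝ) ≤ Real.exp (t * ‖B₀‖ / n) := Real.one_le_exp (by positivity)
      have hP2 : ‖q (sN n)‖ ≤ Mn := by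
        have step1 : ‖q (sN n)‖ ≤ ‖Qn n‖ + ‖q (sN n) - Qn n‖ := by
          calc ‖q (sN n)‖ = ‖Qn n + (q (sN n) - Qn n)‖ := by congr 1; abel
            _ ≤ ‖Qn n‖ + ‖q (sN n) - Qn n‖ := norm_add_le _ _
        have hQe : ‖Qn n‖ ≤ Real.exp (t * ‖B₀‖ / n) := by
          refine (my_norm_exp_le _).trans (Real.exp_le_exp.2 ?_)
          calc ‖(t/(n:ℝ)) • B₀‖ = t/(n:ℝ) * ‖B₀‖ := hns
            _ = t * ‖B₀‖ / n := by rw [div_mul_eq_mul_div]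
            _ ≤ t * ‖B₀‖ / n := le_rfl
        have step2 : ‖q (sN n)‖ ≤ Real.exp (t * ‖B₀‖ / n) + 2*t/n := by
          have : δ * (2*t/n) ≤ 2*t/n := by
            nlinarith [hδ0.le, hδ1]
          linarith [step1, hPQ, hQe]
        have step3 : Real.exp (t * ‖B₀‖ / n) + 2*t/n ≤
            Real.exp (t * ‖B₀‖ / n) * Real.exp (2*t/n) := by
          have h2tn : (0:ℝ) ≤ 2*t/n := by positivity
          have he2 := Real.add_one_le_exp (2*t/n)
          nlinarith
        have step4 : Real.exp (t * ‖B₀‖ / n) * Real.exp (2*t/n) = Mn := by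
          rw [hMn_def, ← Real.exp_add]
          congr 1
          field_simp
        linarith
      have hbig := my_pow_sub_pow (q (sN n)) (Qn n) Mn hMn1 hP2 hQ2 n
      have hMnpow : Mn ^ n = K := by
        rw [hMn_def, hK_def, ← Real.exp_nat_mul]
        congr 1
        field_simp
      have hδle : δ ≤ η / (4*t*K) := min_le_right _ _
      have hfinal : ‖q (sN n) ^ n - Qn n ^ n‖ ≤ 2*t*K*δ := by
        calc ‖q (sN n) ^ n - Qn n ^ n‖ ≤ n * Mn ^ n * ‖q (sN n) - Qn n‖ := hbig
          _ ≤ n * K * (δ * (2*t/n)) := by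
              rw [hMnpow]
              gcongr
          _ = 2*t*K*δ := by field_simp
      rw [dist_eq_norm, ← hQpow n h3]
      have hlast : 2*t*K*δ < η := by
        have h4 : 2*t*K*δ ≤ 2*t*K*(η / (4*t*K)) := by
          have h40 : (0:ℝ) ≤ 2*t*K := by positivity
          exact mul_le_mul_of_nonneg_left hδle h40
        have h5 : 2*t*K*(η / (4*t*K)) = η/2 := by
          field_simp
          ring
        linarith
      linarith [hfinal]
    exact Filter.eventually_atTop.1 hev
  apply hSclosed.mem_of_tendsto hmain
  filter_upwards [e2] with n h2
  exact hpowS _ (hqS (sN n) ⟨Real.sqrt_nonneg _, h2.le⟩) n
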